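/- arXiv:2403.04630 — 2 statements merged into one kernel-verified Lean document; each statement's English description precedes it below -/
import Mathlib

section
/- Let T, D ∈ ℕ and ℓ ∈ ℕ ∪ {0}. For every pair of node-neighboring insertion-only graph streams S, S' of length T and every time step t ∈ [T] such that both S and S' are (D,ℓ)-bounded through time t, the node distance between the DLL-projected streams satisfies d_node(Π^DLL_D(S)_[t], Π^DLL_D(S')_[t]) ≤ 2ℓ + 1. -/
open Finset

/-- A finite graph: a finite vertex set together with a finite set of undirected edges. -/
structure FinGraph where
  verts : Finset ℕ
  edges : Finset (Sym2 ℕ)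

namespace FinGraph

/-- A finite graph is valid if every edge is a non-loop both of whose endpoints are vertices. -/
def Valid (G : FinGraph) : Prop :=
  ∀ e ∈ G.edges, ¬ e.IsDiag ∧ ∀ v ∈ e, v ∈ G.verts

/-- The degree of a vertex: the number of edges containing it. -/
def degree (G : FinGraph) (v : ℕ) : ℕ :=
  (G.edges.filter (fun e => v ∈ e)).card

/-- Remove a node and all of its adjacent edges. -/
def removeNode (G : FinGraph) (v : ℕ) : FinGraph :=
  ⟨G.verts.erase v, G.edges.filter (fun e => v ∉ e)⟩

/-- Remove a single edge. -/
def removeEdge (G : FinGraph) (e : Sym2 ℕ) : FinGraph :=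
  ⟨G.verts, G.edges.erase e⟩

/-- `G` is `(D, ℓ)`-bounded: it has at most `ℓ` nodes of degree greater than `D`. -/
def DLBounded (G : FinGraph) (D ℓ : ℕ) : Prop :=
  (G.verts.filter (fun v => D < G.degree v)).card ≤ ℓ

end FinGraph

/-- One graph is obtained from the other by removing one node and all of its adjacent edges. -/
def nodeNeighborGraph (G G' : FinGraph) : Prop :=
  (∃ v ∈ G.verts, G' = G.removeNode v) ∨ (∃ v ∈ G'.verts, G = G'.removeNode v)

/-- `G'` is obtained from `G` by removing a single edge, an isolated node,
or a degree-one node together with its adjacent edge. -/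
def edgeRemovalGraph (G G' : FinGraph) : Prop :=
  (∃ e ∈ G.edges, G' = G.removeEdge e) ∨
  (∃ v ∈ G.verts, G.degree v = 0 ∧ G' = FinGraph.mk (G.verts.erase v) G.edges) ∨
  (∃ v ∈ G.verts, G.degree v = 1 ∧ G' = G.removeNode v)

/-- Edge-neighboring graphs. -/
def edgeNeighborGraph (G G' : FinGraph) : Prop :=
  edgeRemovalGraph G G' ∨ edgeRemovalGraph G' G

/-- The length of a shortest chain of valid graphs from `A` to `B` in which
consecutive graphs are related by `R`. -/
noncomputable def graphChainDist (R : FinGraph → FinGraph → Prop) (A B : FinGraph) : ℕ :=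
  sInf {n | ∃ f : ℕ → FinGraph, f 0 = A ∧ f n = B ∧ (∀ i ≤ n, (f i).Valid) ∧
    ∀ i < n, R (f i) (f (i + 1))}

/-- Node distance between finite graphs. -/
noncomputable def graphNodeDist : FinGraph → FinGraph → ℕ := graphChainDist nodeNeighborGraph

/-- Edge distance between finite graphs. -/
noncomputable def graphEdgeDist : FinGraph → FinGraph → ℕ := graphChainDist edgeNeighborGraph

/-- An insertion-only graph stream: the nodes and edges arriving at each time step. -/
structure GraphStream where
  nodes : ℕ → Finset ℕ
  edges : ℕ → Finset (Sym2 ℕ)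

namespace GraphStream

/-- Validity of a graph stream of length `T`: arrivals happen only at times `1, …, T`,
no node or edge arrives twice, and every edge is a non-loop whose endpoints
arrive at or before the edge does. -/
def Valid (T : ℕ) (S : GraphStream) : Prop :=
  (∀ t, ((S.nodes t).Nonempty ∨ (S.edges t).Nonempty) → 1 ≤ t ∧ t ≤ T) ∧
  (∀ s t, s ≠ t → Disjoint (S.nodes s) (S.nodes t)) ∧
  (∀ s t, s ≠ t → Disjoint (S.edges s) (S.edges t)) ∧
  (∀ t, ∀ e ∈ S.edges t, ¬ e.IsDiag ∧ ∀ v ∈ e, ∃ s ≤ t, v ∈ S.nodes s)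

/-- The flattened graph of the stream through time `t`. -/
def flat (S : GraphStream) (t : ℕ) : FinGraph :=
  ⟨(Finset.range (t + 1)).biUnion S.nodes, (Finset.range (t + 1)).biUnion S.edges⟩

/-- Remove a node and all of its adjacent edges from a stream. -/
def removeNode (S : GraphStream) (v : ℕ) : GraphStream :=
  ⟨fun t => (S.nodes t).erase v, fun t => (S.edges t).filter (fun e => v ∉ e)⟩

/-- Remove a single edge from a stream. -/
def removeEdge (S : GraphStream) (e : Sym2 ℕ) : GraphStream :=
  ⟨S.nodes, fun t => (S.edges t).erase e⟩

/-- Truncation of a stream: keep only arrivals at times `≤ t`. -/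
def trunc (S : GraphStream) (t : ℕ) : GraphStream :=
  ⟨fun s => if s ≤ t then S.nodes s else ∅, fun s => if s ≤ t then S.edges s else ∅⟩

/-- `v` arrives at some point in the stream. -/
def hasNode (S : GraphStream) (v : ℕ) : Prop :=
  ∃ t, v ∈ S.nodes t

/-- The stream is `(D, ℓ)`-bounded through time `t`. -/
def DLBoundedThrough (S : GraphStream) (D ℓ t : ℕ) : Prop :=
  (S.flat t).DLBounded D ℓ

end GraphStream

/-- `S'` is obtained from `S` by removing one node and all of its adjacent edges
(which may arrive at many time steps). -/
def nodeRemovalStream (S S' : GraphStream) : Prop :=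
  ∃ v, S.hasNode v ∧ S' = S.removeNode v

/-- Node-neighboring streams. -/
def nodeNeighborStream (S S' : GraphStream) : Prop :=
  nodeRemovalStream S S' ∨ nodeRemovalStream S' S

/-- `S'` is obtained from the length-`T` stream `S` by removing a single edge,
an isolated node, or a degree-one node together with its adjacent edge. -/
def edgeRemovalStream (T : ℕ) (S S' : GraphStream) : Prop :=
  (∃ t, ∃ e ∈ S.edges t, S' = S.removeEdge e) ∨
  (∃ v, S.hasNode v ∧ (S.flat T).degree v ≤ 1 ∧ S' = S.removeNode v)

/-- Edge-neighboring streams (of length `T`). -/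
def edgeNeighborStream (T : ℕ) (S S' : GraphStream) : Prop :=
  edgeRemovalStream T S S' ∨ edgeRemovalStream T S' S

/-- Length of a shortest chain of valid streams of length `T` in which consecutive
streams are related by `R`. -/
noncomputable def streamChainDist (T : ℕ) (R : GraphStream → GraphStream → Prop)
    (A B : GraphStream) : ℕ :=
  sInf {n | ∃ f : ℕ → GraphStream, f 0 = A ∧ f n = B ∧ (∀ i ≤ n, (f i).Valid T) ∧
    ∀ i < n, R (f i) (f (i + 1))}

/-- Node distance between streams of length `T`. -/
noncomputable def streamNodeDist (T : ℕ) : GraphStream → GraphStream → ℕ :=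
  streamChainDist T nodeNeighborStream

/-- Edge distance between streams of length `T`. -/
noncomputable def streamEdgeDist (T : ℕ) : GraphStream → GraphStream → ℕ :=
  streamChainDist T (edgeNeighborStream T)

/-- A fixed injective key on undirected edges, providing the consistent total order in
which edges arriving at the same time step are processed. -/
def edgeKey : Sym2 ℕ → ℕ :=
  Sym2.lift ⟨fun a b => Nat.pair (min a b) (max a b), fun a b => by
    dsimp only; rw [inf_comm, sup_comm]⟩

/-- The two endpoints of an edge, as an ordered pair. -/
def endpointsOf (e : Sym2 ℕ) : ℕ × ℕ := (edgeKey e).unpair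

/-- The edges of a finite edge set, listed in increasing `edgeKey` order. -/
def sortEdges (E : Finset (Sym2 ℕ)) : List (Sym2 ℕ) :=
  ((E.image edgeKey).sort (· ≤ ·)).map fun k => s(k.unpair.1, k.unpair.2)

/-- All edges of a stream of length `T`, tagged with their arrival times, in processing
order: lexicographically by (arrival time, consistent edge order). -/
def GraphStream.procList (S : GraphStream) (T : ℕ) : List (ℕ × Sym2 ℕ) :=
  (List.range (T + 1)).flatMap fun t => (sortEdges (S.edges t)).map fun e => (t, e)

/-- One step of the greedy projection with degree bound `D`.  The state consists of the
degree counters together with the edges kept so far (indexed by arrival time).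
If `bbds = true` the counters of the endpoints are incremented for every processed edge
(the BBDS rule); if `bbds = false` they are incremented only when the edge is kept
(the DLL rule). -/
def projStep (D : ℕ) (bbds : Bool) (st : (ℕ → ℕ) × (ℕ → Finset (Sym2 ℕ)))
    (p : ℕ × Sym2 ℕ) : (ℕ → ℕ) × (ℕ → Finset (Sym2 ℕ)) :=
  let d := st.1
  let u := (endpointsOf p.2).1
  let v := (endpointsOf p.2).2
  let keep : Bool := decide (d u < D ∧ d v < D)
  ((if bbds || keep then fun w => if w = u ∨ w = v then d w + 1 else d w else d),
   (if keep then fun s => if s = p.1 then insert p.2 (st.2 s) else st.2 s else st.2))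

/-- The time-aware projection with degree bound `D` on streams of length `T`:
the BBDS projection if `bbds = true` and the DLL projection if `bbds = false`.
All arriving nodes are kept; an arriving edge is kept (at its arrival time) iff both of
its endpoints have counter value `< D` when the edge is processed. -/
def project (bbds : Bool) (D T : ℕ) (S : GraphStream) : GraphStream :=
  ⟨S.nodes,
   ((S.procList T).foldl (projStep D bbds)
      ((fun _ => 0 : ℕ → ℕ), (fun _ => ∅ : ℕ → Finset (Sym2 ℕ)))).2⟩

/-- The BBDS projection `Π^BBDS_D` on streams of length `T`. -/
def projBBDS (D T : ℕ) : GraphStream → GraphStream := project true D T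

/-- The DLL projection `Π^DLL_D` on streams of length `T`. -/
def projDLL (D T : ℕ) : GraphStream → GraphStream := project false D T

lemma recon_edgeKey (e : Sym2 ℕ) : s((edgeKey e).unpair.1, (edgeKey e).unpair.2) = e := by
  induction e using Sym2.ind with
  | _ a b =>
    have h : edgeKey s(a, b) = Nat.pair (min a b) (max a b) := rfl
    rw [h, Nat.unpair_pair]
    rcases le_total a b with hab | hab
    · simp [min_eq_left hab, max_eq_right hab]
    · simp [min_eq_right hab, max_eq_left hab, Sym2.eq_swap]

lemma endpointsOf_fst_mem (e : Sym2 ℕ) : (endpointsOf e).1 ∈ e := by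
  have h : (endpointsOf e).1 ∈ s((edgeKey e).unpair.1, (edgeKey e).unpair.2) :=
    Sym2.mem_mk_left _ _
  rwa [recon_edgeKey] at h

lemma endpointsOf_snd_mem (e : Sym2 ℕ) : (endpointsOf e).2 ∈ e := by
  have h : (endpointsOf e).2 ∈ s((edgeKey e).unpair.1, (edgeKey e).unpair.2) :=
    Sym2.mem_mk_right _ _
  rwa [recon_edgeKey] at h

lemma mem_sortEdges {E : Finset (Sym2 ℕ)} {e : Sym2 ℕ} : e ∈ sortEdges E ↔ e ∈ E := by
  simp only [sortEdges, List.mem_map, Finset.mem_sort, Finset.mem_image]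
  constructor
  · rintro ⟨k, ⟨e', he', rfl⟩, rfl⟩
    rwa [recon_edgeKey]
  · intro he
    exact ⟨edgeKey e, ⟨e, he, rfl⟩, recon_edgeKey e⟩

lemma sortEdges_nodup (E : Finset (Sym2 ℕ)) : (sortEdges E).Nodup := by
  refine List.Nodup.map_on ?_ (Finset.sort_nodup _ _)
  intro k1 hk1 k2 hk2 h
  rw [Finset.mem_sort, Finset.mem_image] at hk1 hk2
  obtain ⟨e1, _, rfl⟩ := hk1
  obtain ⟨e2, _, rfl⟩ := hk2
  have := congrArg edgeKey h
  rwa [recon_edgeKey, recon_edgeKey] at this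


lemma mem_procList {S : GraphStream} {T s : ℕ} {e : Sym2 ℕ} :
    (s, e) ∈ S.procList T ↔ s ≤ T ∧ e ∈ S.edges s := by
  simp only [GraphStream.procList, List.mem_flatMap, List.mem_map, List.mem_range]
  constructor
  · rintro ⟨t', ht', e', he', h⟩
    obtain ⟨rfl, rfl⟩ : t' = s ∧ e' = e := by
      constructor <;> [exact (Prod.mk.injEq _ _ _ _ ▸ h).1; exact (Prod.mk.injEq _ _ _ _ ▸ h).2]
    exact ⟨Nat.lt_succ_iff.mp ht', mem_sortEdges.mp he'⟩
  · rintro ⟨hsT, he⟩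
    exact ⟨s, Nat.lt_succ_iff.mpr hsT, e, mem_sortEdges.mpr he, rfl⟩

lemma mem_procList' {S : GraphStream} {T : ℕ} {p : ℕ × Sym2 ℕ} (h : p ∈ S.procList T) :
    p.1 ≤ T ∧ p.2 ∈ S.edges p.1 := by
  have : (p.1, p.2) ∈ S.procList T := by simpa using h
  exact mem_procList.mp this

lemma procList_pairwise {S : GraphStream} {T : ℕ} (hS : S.Valid T) :
    (S.procList T).Pairwise (fun p q => p.1 ≤ q.1 ∧ p.2 ≠ q.2) := by
  have key : ∀ n : ℕ, ((List.range n).flatMap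
      fun t => (sortEdges (S.edges t)).map fun e => (t, e)).Pairwise
      (fun p q : ℕ × Sym2 ℕ => p.1 ≤ q.1 ∧ p.2 ≠ q.2) := by
    intro n
    induction n with
    | zero => simp
    | succ n ih =>
      rw [List.range_succ, List.flatMap_append, List.pairwise_append]
      refine ⟨ih, ?_, ?_⟩
      · simp only [List.flatMap_cons, List.flatMap_nil, List.append_nil]
        refine List.Pairwise.map _ ?_ ((sortEdges_nodup (S.edges n)))
        intro a b hab
        exact ⟨le_refl _, hab⟩
      · intro p hp q hq
        simp only [List.mem_flatMap, List.mem_map, List.mem_range] at hp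
        simp only [List.flatMap_cons, List.flatMap_nil, List.append_nil, List.mem_map] at hq
        obtain ⟨t', ht', e', he', rfl⟩ := hp
        obtain ⟨e'', he'', rfl⟩ := hq
        refine ⟨le_of_lt ht', ?_⟩
        intro hcon
        dsimp at hcon
        subst hcon
        have h1 : e' ∈ S.edges t' := mem_sortEdges.mp he'
        have h2 : e' ∈ S.edges n := mem_sortEdges.mp he''
        exact (Finset.disjoint_left.mp (hS.2.2.1 t' n (Nat.ne_of_lt ht')) h1) h2
  exact key (T + 1)

lemma projStep_edges_mono (D : ℕ) (b : Bool) (st : (ℕ → ℕ) × (ℕ → Finset (Sym2 ℕ)))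
    (p : ℕ × Sym2 ℕ) (s : ℕ) : st.2 s ⊆ (projStep D b st p).2 s := by
  simp only [projStep]
  split_ifs with hk
  · dsimp only
    split_ifs with hs
    · exact Finset.subset_insert _ _
    · exact subset_rfl
  · exact subset_rfl

lemma foldl_edges_mono (D : ℕ) (b : Bool) (l : List (ℕ × Sym2 ℕ)) :
    ∀ st s, st.2 s ⊆ (l.foldl (projStep D b) st).2 s := by
  induction l with
  | nil => intro st s; exact subset_rfl
  | cons p l ih =>
    intro st s
    exact (projStep_edges_mono D b st p s).trans (ih _ s)

lemma foldl_edges_subset (D : ℕ) (b : Bool) (E : ℕ → Finset (Sym2 ℕ)) :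
    ∀ (l : List (ℕ × Sym2 ℕ)), (∀ p ∈ l, p.2 ∈ E p.1) →
    ∀ st, (∀ s, st.2 s ⊆ E s) → ∀ s, (l.foldl (projStep D b) st).2 s ⊆ E s := by
  intro l
  induction l with
  | nil => intro _ st hst s; exact hst s
  | cons p l ih =>
    intro hl st hst s
    refine ih (fun q hq => hl q (List.mem_cons_of_mem _ hq)) _ ?_ s
    intro s'
    simp only [projStep]
    split_ifs with hk
    · dsimp only
      split_ifs with hs
      · subst hs
        exact Finset.insert_subset (hl p List.mem_cons_self) (hst _)
      · exact hst s'
    · exact hst s'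

lemma projStep_counter_le (D : ℕ) (st : (ℕ → ℕ) × (ℕ → Finset (Sym2 ℕ)))
    (p : ℕ × Sym2 ℕ) (u : ℕ) :
    (projStep D false st p).1 u ≤ st.1 u + (if u ∈ p.2 then 1 else 0) := by
  simp only [projStep, Bool.false_or]
  split_ifs with hk hu hu
  · dsimp only
    split_ifs with he
    · exact le_refl _
    · exact Nat.le_succ _
  · dsimp only
    split_ifs with he
    · rcases he with he | he
      · exact absurd (he ▸ endpointsOf_fst_mem p.2) hu
      · exact absurd (he ▸ endpointsOf_snd_mem p.2) hu
    · exact le_refl _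
  · exact Nat.le_succ _
  · exact le_refl _

lemma foldl_counter_le (D : ℕ) (u : ℕ) :
    ∀ (l : List (ℕ × Sym2 ℕ)) (st : (ℕ → ℕ) × (ℕ → Finset (Sym2 ℕ))),
    (l.foldl (projStep D false) st).1 u ≤ st.1 u + l.countP (fun p => decide (u ∈ p.2)) := by
  intro l
  induction l with
  | nil => intro st; simp
  | cons p l ih =>
    intro st
    have h1 := ih (projStep D false st p)
    have h2 := projStep_counter_le D st p u
    rw [List.foldl_cons, List.countP_cons]
    have : (if decide (u ∈ p.2) = true then 1 else 0) = (if u ∈ p.2 then 1 else 0) := by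
      split_ifs with h h' h' <;> simp_all
    omega

lemma project_edges_subset (b : Bool) (D T : ℕ) (S : GraphStream) (s : ℕ) :
    (project b D T S).edges s ⊆ S.edges s := by
  show ((S.procList T).foldl (projStep D b) _).2 s ⊆ S.edges s
  exact foldl_edges_subset D b S.edges (S.procList T)
    (fun p hp => (mem_procList' hp).2) _ (fun s' => by simp) s

lemma kept_of_low_degree {S : GraphStream} {T D t s : ℕ} {e : Sym2 ℕ}
    (hS : S.Valid T) (hst : s ≤ t) (htT : t ≤ T) (he : e ∈ S.edges s)
    (hdeg : ∀ u ∈ e, (S.flat t).degree u ≤ D) :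
    e ∈ (project false D T S).edges s := by
  have hmem : (s, e) ∈ S.procList T := mem_procList.mpr ⟨le_trans hst htT, he⟩
  obtain ⟨l1, l2, hsplit⟩ := List.append_of_mem hmem
  have hpw := procList_pairwise hS
  rw [hsplit, List.pairwise_append] at hpw
  obtain ⟨hpw1, _, hcross⟩ := hpw
  have hl1 : ∀ p ∈ l1, p.1 ≤ s ∧ p.2 ≠ e :=
    fun p hp => hcross p hp (s, e) List.mem_cons_self
  set init : (ℕ → ℕ) × (ℕ → Finset (Sym2 ℕ)) :=
    ((fun _ => 0 : ℕ → ℕ), (fun _ => ∅ : ℕ → Finset (Sym2 ℕ))) with hinit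
  set st1 := l1.foldl (projStep D false) init with hst1
  -- counter bound for any endpoint u of e
  have hcnt : ∀ u ∈ e, st1.1 u < D := by
    intro u hu
    have hb1 : st1.1 u ≤ l1.countP (fun p => decide (u ∈ p.2)) := by
      have := foldl_counter_le D u l1 init
      simpa [hinit] using this
    have hcp : l1.countP (fun p => decide (u ∈ p.2)) =
        ((l1.map Prod.snd).filter (fun e' => decide (u ∈ e'))).length := by
      have hco : (fun p : ℕ × Sym2 ℕ => decide (u ∈ p.2)) =
          ((fun e' => decide (u ∈ e')) ∘ Prod.snd) := rfl
      rw [hco, ← List.countP_map, List.countP_eq_length_filter]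
    have hnd0 : (l1.map Prod.snd).Nodup :=
      (List.pairwise_map).mpr (hpw1.imp (fun h => h.2))
    have hnd : ((l1.map Prod.snd).filter (fun e' => decide (u ∈ e'))).Nodup :=
      hnd0.filter _
    have hlen : ((l1.map Prod.snd).filter (fun e' => decide (u ∈ e'))).length =
        ((l1.map Prod.snd).filter (fun e' => decide (u ∈ e'))).toFinset.card :=
      (List.toFinset_card_of_nodup hnd).symm
    have hsub : ((l1.map Prod.snd).filter (fun e' => decide (u ∈ e'))).toFinset ⊆
        ((S.flat t).edges.filter (fun e' => u ∈ e')).erase e := by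
      intro x hx
      rw [List.mem_toFinset, List.mem_filter] at hx
      obtain ⟨hx1, hx2⟩ := hx
      rw [List.mem_map] at hx1
      obtain ⟨p, hp, rfl⟩ := hx1
      have hps := hl1 p hp
      have hpe : p ∈ S.procList T := hsplit ▸ List.mem_append_left _ hp
      have hpm := mem_procList' hpe
      refine Finset.mem_erase.mpr ⟨hps.2, ?_⟩
      rw [Finset.mem_filter]
      constructor
      · exact Finset.mem_biUnion.mpr ⟨p.1,
          Finset.mem_range.mpr (Nat.lt_succ_of_le (hps.1.trans hst)), hpm.2⟩
      · exact of_decide_eq_true hx2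
    have hemem : e ∈ (S.flat t).edges.filter (fun e' => u ∈ e') := by
      rw [Finset.mem_filter]
      exact ⟨Finset.mem_biUnion.mpr ⟨s, Finset.mem_range.mpr (Nat.lt_succ_of_le hst), he⟩, hu⟩
    have hdegeq : ((S.flat t).edges.filter (fun e' => u ∈ e')).card = (S.flat t).degree u := rfl
    calc st1.1 u ≤ l1.countP (fun p => decide (u ∈ p.2)) := hb1
      _ = ((l1.map Prod.snd).filter (fun e' => decide (u ∈ e'))).length := hcp
      _ = ((l1.map Prod.snd).filter (fun e' => decide (u ∈ e'))).toFinset.card := hlen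
      _ ≤ (((S.flat t).edges.filter (fun e' => u ∈ e')).erase e).card :=
          Finset.card_le_card hsub
      _ < ((S.flat t).edges.filter (fun e' => u ∈ e')).card :=
          Finset.card_erase_lt_of_mem hemem
      _ = (S.flat t).degree u := hdegeq
      _ ≤ D := hdeg u hu
  have hk1 : st1.1 (endpointsOf e).1 < D := hcnt _ (endpointsOf_fst_mem e)
  have hk2 : st1.1 (endpointsOf e).2 < D := hcnt _ (endpointsOf_snd_mem e)
  have hkeep : decide (st1.1 (endpointsOf e).1 < D ∧ st1.1 (endpointsOf e).2 < D) = true :=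
    decide_eq_true ⟨hk1, hk2⟩
  show e ∈ ((S.procList T).foldl (projStep D false) init).2 s
  rw [hsplit, List.foldl_append, List.foldl_cons]
  refine foldl_edges_mono D false l2 _ s ?_
  rw [← hst1]
  have hstep : e ∈ (projStep D false st1 (s, e)).2 s := by
    simp only [projStep, hkeep]
    simp
  exact hstep

/-- Iterated node removal from a stream. -/
def remList (l : List ℕ) (A : GraphStream) : GraphStream :=
  l.foldl GraphStream.removeNode A

lemma remList_nil (A : GraphStream) : remList [] A = A := rfl

lemma remList_cons (x : ℕ) (l : List ℕ) (A : GraphStream) :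
    remList (x :: l) A = remList l (A.removeNode x) := rfl

lemma remList_append (l1 l2 : List ℕ) (A : GraphStream) :
    remList (l1 ++ l2) A = remList l2 (remList l1 A) :=
  List.foldl_append ..

lemma mem_remList_nodes {l : List ℕ} {A : GraphStream} {s u : ℕ} :
    u ∈ (remList l A).nodes s ↔ u ∈ A.nodes s ∧ u ∉ l := by
  induction l generalizing A with
  | nil => simp [remList_nil]
  | cons x l ih =>
    rw [remList_cons, ih]
    simp only [GraphStream.removeNode, Finset.mem_erase, List.mem_cons]
    tauto

lemma mem_remList_edges {l : List ℕ} {A : GraphStream} {s : ℕ} {e : Sym2 ℕ} :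
    e ∈ (remList l A).edges s ↔ e ∈ A.edges s ∧ ∀ w ∈ l, w ∉ e := by
  induction l generalizing A with
  | nil => simp [remList_nil]
  | cons x l ih =>
    rw [remList_cons, ih]
    simp only [GraphStream.removeNode, Finset.mem_filter, List.mem_cons]
    constructor
    · rintro ⟨⟨h1, h2⟩, h3⟩
      exact ⟨h1, fun w hw => by rcases hw with rfl | hw; exacts [h2, h3 w hw]⟩
    · rintro ⟨h1, h2⟩
      exact ⟨⟨h1, h2 x (Or.inl rfl)⟩, fun w hw => h2 w (Or.inr hw)⟩

lemma removeNode_valid {A : GraphStream} {t : ℕ} (hA : A.Valid t) (v : ℕ) :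
    (A.removeNode v).Valid t := by
  obtain ⟨h1, h2, h3, h4⟩ := hA
  refine ⟨?_, ?_, ?_, ?_⟩
  · intro s hs
    refine h1 s ?_
    rcases hs with hn | he
    · exact Or.inl (hn.mono (Finset.erase_subset _ _))
    · exact Or.inr (he.mono (Finset.filter_subset _ _))
  · intro s s' hss'
    exact ((h2 s s' hss').mono_left (Finset.erase_subset _ _)).mono_right
      (Finset.erase_subset _ _)
  · intro s s' hss'
    exact ((h3 s s' hss').mono_left (Finset.filter_subset _ _)).mono_right
      (Finset.filter_subset _ _)
  · intro s e he
    simp only [GraphStream.removeNode, Finset.mem_filter] at he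
    obtain ⟨he, hv⟩ := he
    refine ⟨(h4 s e he).1, fun u hu => ?_⟩
    obtain ⟨s', hs', hu'⟩ := (h4 s e he).2 u hu
    refine ⟨s', hs', Finset.mem_erase.mpr ⟨?_, hu'⟩⟩
    rintro rfl
    exact hv hu

lemma remList_valid {l : List ℕ} {A : GraphStream} {t : ℕ} (hA : A.Valid t) :
    (remList l A).Valid t := by
  induction l generalizing A with
  | nil => exact hA
  | cons x l ih => exact remList_cons x l A ▸ ih (removeNode_valid hA x)

/-- The set of chain lengths between two streams. -/
def CSet (t : ℕ) (R : GraphStream → GraphStream → Prop) (A B : GraphStream) : Set ℕ :=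
  {n | ∃ f : ℕ → GraphStream, f 0 = A ∧ f n = B ∧ (∀ i ≤ n, (f i).Valid t) ∧
    ∀ i < n, R (f i) (f (i + 1))}

lemma streamChainDist_le {t n : ℕ} {R : GraphStream → GraphStream → Prop}
    {A B : GraphStream} (h : n ∈ CSet t R A B) : streamChainDist t R A B ≤ n :=
  Nat.sInf_le h

lemma CSet_comp {t : ℕ} {R : GraphStream → GraphStream → Prop} {A B C : GraphStream}
    {n1 n2 : ℕ} (h1 : n1 ∈ CSet t R A B) (h2 : n2 ∈ CSet t R B C) :
    n1 + n2 ∈ CSet t R A C := by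
  obtain ⟨f1, hf10, hf1n, hf1v, hf1r⟩ := h1
  obtain ⟨f2, hf20, hf2n, hf2v, hf2r⟩ := h2
  refine ⟨fun i => if i < n1 then f1 i else f2 (i - n1), ?_, ?_, ?_, ?_⟩
  · dsimp only
    split_ifs with h
    · exact hf10
    · have hn1 : n1 = 0 := by omega
      rw [show (0 - n1 : ℕ) = 0 from by omega, hf20, ← hf1n, hn1, hf10]
  · dsimp only
    rw [if_neg (by omega), show n1 + n2 - n1 = n2 from by omega, hf2n]
  · intro i hi
    dsimp only
    split_ifs with h
    · exact hf1v i (le_of_lt h)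
    · exact hf2v (i - n1) (by omega)
  · intro i hi
    dsimp only
    by_cases h : i + 1 < n1
    · rw [if_pos (by omega), if_pos h]
      exact hf1r i (by omega)
    · by_cases h' : i < n1
      · rw [if_pos h', if_neg h, show i + 1 - n1 = 0 from by omega, hf20,
          ← hf1n, show n1 = i + 1 from by omega]
        exact hf1r i (by omega)
      · rw [if_neg h', if_neg h, show i + 1 - n1 = (i - n1) + 1 from by omega]
        exact hf2r (i - n1) (by omega)

lemma CSet_symm {t n : ℕ} {R : GraphStream → GraphStream → Prop} {A B : GraphStream}
    (hR : ∀ X Y, R X Y → R Y X) (h : n ∈ CSet t R A B) : n ∈ CSet t R B A := by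
  obtain ⟨f, hf0, hfn, hfv, hfr⟩ := h
  refine ⟨fun i => f (n - i), by simp [hfn], by simp [hf0],
    fun i _ => hfv (n - i) (by omega), ?_⟩
  intro i hi
  have h1 : n - i = (n - (i + 1)) + 1 := by omega
  have := hfr (n - (i + 1)) (by omega)
  dsimp only
  rw [h1]
  exact hR _ _ this

lemma nodeNeighborStream_symm (X Y : GraphStream) (h : nodeNeighborStream X Y) :
    nodeNeighborStream Y X := h.symm

lemma CSet_single {t : ℕ} {A : GraphStream} (hA : A.Valid t) {v : ℕ} (hv : A.hasNode v) :
    1 ∈ CSet t nodeNeighborStream A (A.removeNode v) := by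
  refine ⟨fun i => if i = 0 then A else A.removeNode v, by simp, by simp, ?_, ?_⟩
  · intro i _
    dsimp only
    split_ifs
    · exact hA
    · exact removeNode_valid hA v
  · intro i hi
    have hi0 : i = 0 := by omega
    subst hi0
    simp only [if_pos rfl, if_neg one_ne_zero]
    exact Or.inl ⟨v, hv, rfl⟩

lemma CSet_remList {t : ℕ} :
    ∀ (l : List ℕ) (A : GraphStream), A.Valid t → l.Nodup → (∀ w ∈ l, A.hasNode w) →
    l.length ∈ CSet t nodeNeighborStream A (remList l A) := by
  intro l
  induction l with
  | nil =>
    intro A hA _ _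
    exact ⟨fun _ => A, rfl, rfl, fun i _ => hA, fun i hi => absurd hi (by simp)⟩
  | cons x l ih =>
    intro A hA hnd hhas
    have hA' := removeNode_valid hA x
    have h1 := CSet_single hA (hhas x List.mem_cons_self)
    have h2 := ih (A.removeNode x) hA' hnd.of_cons ?_
    · rw [remList_cons]
      have := CSet_comp h1 h2
      simpa [Nat.add_comm] using this
    · intro w hw
      obtain ⟨s, hs⟩ := hhas w (List.mem_cons_of_mem _ hw)
      refine ⟨s, Finset.mem_erase.mpr ⟨?_, hs⟩⟩
      rintro rfl
      exact (List.nodup_cons.mp hnd).1 hw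

lemma trunc_nodes_eq (S' : GraphStream) (t s : ℕ) :
    (S'.trunc t).nodes s = if s ≤ t then S'.nodes s else ∅ := rfl

lemma trunc_edges_eq (S' : GraphStream) (t s : ℕ) :
    (S'.trunc t).edges s = if s ≤ t then S'.edges s else ∅ := rfl

lemma project_nodes_eq (b : Bool) (D T : ℕ) (S : GraphStream) :
    (project b D T S).nodes = S.nodes := rfl

lemma trunc_project_valid {S : GraphStream} {T t : ℕ} (b : Bool) (D : ℕ)
    (hS : S.Valid T) (htT : t ≤ T) : ((project b D T S).trunc t).Valid t := by
  obtain ⟨h1, h2, h3, h4⟩ := hS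
  refine ⟨?_, ?_, ?_, ?_⟩
  · intro s hs
    by_cases hst : s ≤ t
    · refine ⟨?_, hst⟩
      rcases hs with hn | he
      · rw [trunc_nodes_eq, if_pos hst, project_nodes_eq] at hn
        exact (h1 s (Or.inl hn)).1
      · rw [trunc_edges_eq, if_pos hst] at he
        obtain ⟨e, hee⟩ := he
        exact (h1 s (Or.inr ⟨e, project_edges_subset b D T S s hee⟩)).1
    · exfalso
      rcases hs with hn | he
      · rw [trunc_nodes_eq, if_neg hst] at hn
        exact Finset.not_nonempty_empty hn
      · rw [trunc_edges_eq, if_neg hst] at he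
        exact Finset.not_nonempty_empty he
  · intro s s' hss'
    rw [trunc_nodes_eq, trunc_nodes_eq, project_nodes_eq]
    split_ifs
    · exact h2 s s' hss'
    · exact Finset.disjoint_empty_right _
    · exact Finset.disjoint_empty_left _
    · exact Finset.disjoint_empty_left _
  · intro s s' hss'
    rw [trunc_edges_eq, trunc_edges_eq]
    split_ifs
    · exact ((h3 s s' hss').mono_left (project_edges_subset b D T S s)).mono_right
        (project_edges_subset b D T S s')
    · exact Finset.disjoint_empty_right _
    · exact Finset.disjoint_empty_left _
    · exact Finset.disjoint_empty_left _
  · intro s e he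
    rw [trunc_edges_eq] at he
    by_cases hst : s ≤ t
    · rw [if_pos hst] at he
      have heS := project_edges_subset b D T S s he
      refine ⟨(h4 s e heS).1, fun u hu => ?_⟩
      obtain ⟨s', hs', hu'⟩ := (h4 s e heS).2 u hu
      refine ⟨s', hs', ?_⟩
      rw [trunc_nodes_eq, if_pos (hs'.trans hst), project_nodes_eq]
      exact hu'
    · rw [if_neg hst] at he
      exact absurd he (Finset.notMem_empty e)

lemma mem_flat_verts_iff {S : GraphStream} {t u : ℕ} :
    u ∈ (S.flat t).verts ↔ ∃ s ≤ t, u ∈ S.nodes s := by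
  simp [GraphStream.flat, Nat.lt_succ_iff]

lemma mem_flat_edges_iff {S : GraphStream} {t : ℕ} {e : Sym2 ℕ} :
    e ∈ (S.flat t).edges ↔ ∃ s ≤ t, e ∈ S.edges s := by
  simp [GraphStream.flat, Nat.lt_succ_iff]

lemma mem_flat_verts_of_edge {S : GraphStream} {T t s u : ℕ} {e : Sym2 ℕ}
    (hS : S.Valid T) (hst : s ≤ t) (he : e ∈ S.edges s) (hu : u ∈ e) :
    u ∈ (S.flat t).verts := by
  obtain ⟨s', hs', hu'⟩ := (hS.2.2.2 s e he).2 u hu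
  exact mem_flat_verts_iff.mpr ⟨s', hs'.trans hst, hu'⟩

lemma degree_flat_removeNode_le (S : GraphStream) (v t u : ℕ) :
    ((S.removeNode v).flat t).degree u ≤ (S.flat t).degree u := by
  apply Finset.card_le_card
  apply Finset.filter_subset_filter
  intro e he
  rw [mem_flat_edges_iff] at he ⊢
  obtain ⟨s, hs, he⟩ := he
  simp only [GraphStream.removeNode, Finset.mem_filter] at he
  exact ⟨s, hs, he.1⟩

lemma GraphStream.ext' {A B : GraphStream}
    (hn : ∀ s u, u ∈ A.nodes s ↔ u ∈ B.nodes s)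
    (he : ∀ s e, e ∈ A.edges s ↔ e ∈ B.edges s) : A = B := by
  cases A with | mk An Ae =>
  cases B with | mk Bn Be =>
  simp only [GraphStream.mk.injEq]
  constructor
  · funext s
    exact Finset.ext (hn s)
  · funext s
    exact Finset.ext (he s)

lemma key_eq {S : GraphStream} {T D t v : ℕ} (hS : S.Valid T)
    (hS' : (S.removeNode v).Valid T) (htT : t ≤ T) (W : Finset ℕ)
    (hH : ∀ u, u ∈ (S.flat t).verts → D < (S.flat t).degree u → u ∈ W)
    (hv : v ∈ (S.flat t).verts → v ∈ W) :
    remList W.toList ((project false D T S).trunc t) =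
    remList (W.erase v).toList ((project false D T (S.removeNode v)).trunc t) := by
  apply GraphStream.ext'
  · intro s u
    rw [mem_remList_nodes, mem_remList_nodes, trunc_nodes_eq, trunc_nodes_eq,
      project_nodes_eq, project_nodes_eq]
    by_cases hst : s ≤ t
    · rw [if_pos hst, if_pos hst]
      simp only [Finset.mem_toList, GraphStream.removeNode, Finset.mem_erase]
      constructor
      · rintro ⟨hu, huW⟩
        have huv : u ≠ v := by
          rintro rfl
          exact huW (hv (mem_flat_verts_iff.mpr ⟨s, hst, hu⟩))
        exact ⟨⟨huv, hu⟩, fun hmem => huW hmem.2⟩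
      · rintro ⟨⟨huv, hu⟩, huW'⟩
        exact ⟨hu, fun hmem => huW' ⟨huv, hmem⟩⟩
    · rw [if_neg hst, if_neg hst]
      simp
  · intro s e
    rw [mem_remList_edges, mem_remList_edges, trunc_edges_eq, trunc_edges_eq]
    by_cases hst : s ≤ t
    · rw [if_pos hst, if_pos hst]
      constructor
      · rintro ⟨hPe, hW⟩
        have hW' : ∀ w ∈ W, w ∉ e := fun w hw => hW w (Finset.mem_toList.mpr hw)
        have heS : e ∈ S.edges s := project_edges_subset false D T S s hPe
        have hve : v ∉ e := by
          intro hvmem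
          by_cases hvv : v ∈ (S.flat t).verts
          · exact hW' v (hv hvv) hvmem
          · exact hvv (mem_flat_verts_of_edge hS hst heS hvmem)
        have heS' : e ∈ (S.removeNode v).edges s := by
          simp only [GraphStream.removeNode, Finset.mem_filter]
          exact ⟨heS, hve⟩
        refine ⟨kept_of_low_degree hS' hst htT heS' ?_, ?_⟩
        · intro u hu
          have huW : u ∉ W := fun hmem => hW' u hmem hu
          have hdS : (S.flat t).degree u ≤ D := by
            by_contra hd
            exact huW (hH u (mem_flat_verts_of_edge hS hst heS hu) (by omega))
          exact (degree_flat_removeNode_le S v t u).trans hdS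
        · intro w hw
          rw [Finset.mem_toList, Finset.mem_erase] at hw
          exact hW' w hw.2
      · rintro ⟨hPe, hW'⟩
        have hWe : ∀ w ∈ W.erase v, w ∉ e := fun w hw =>
          hW' w (Finset.mem_toList.mpr hw)
        have heS' : e ∈ (S.removeNode v).edges s :=
          project_edges_subset false D T (S.removeNode v) s hPe
        simp only [GraphStream.removeNode, Finset.mem_filter] at heS'
        obtain ⟨heS, hve⟩ := heS'
        have hW : ∀ w ∈ W, w ∉ e := by
          intro w hw
          by_cases hwv : w = v
          · exact hwv ▸ hve
          · exact hWe w (Finset.mem_erase.mpr ⟨hwv, hw⟩)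
        refine ⟨kept_of_low_degree hS hst htT heS ?_, fun w hw => hW w (Finset.mem_toList.mp hw)⟩
        intro u hu
        by_contra hd
        exact hW u (hH u (mem_flat_verts_of_edge hS hst heS hu) (by omega)) hu
    · rw [if_neg hst, if_neg hst]
      simp

lemma main_one_dir {T D ℓ t v : ℕ} {S : GraphStream} (hS : S.Valid T)
    (hS' : (S.removeNode v).Valid T) (htT : t ≤ T)
    (hbS : S.DLBoundedThrough D ℓ t) :
    ∃ n, n ≤ 2 * ℓ + 1 ∧ n ∈ CSet t nodeNeighborStream ((project false D T S).trunc t)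
      ((project false D T (S.removeNode v)).trunc t) := by
  classical
  set H : Finset ℕ := (S.flat t).verts.filter (fun u => D < (S.flat t).degree u) with hHdef
  set W : Finset ℕ := if v ∈ (S.flat t).verts then insert v H else H with hWdef
  have hHcard : H.card ≤ ℓ := hbS
  have hHW : ∀ u, u ∈ (S.flat t).verts → D < (S.flat t).degree u → u ∈ W := by
    intro u h1 h2
    have hu : u ∈ H := Finset.mem_filter.mpr ⟨h1, h2⟩
    rw [hWdef]
    split_ifs
    · exact Finset.mem_insert_of_mem hu
    · exact hu
  have hvW : v ∈ (S.flat t).verts → v ∈ W := by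
    intro h
    rw [hWdef, if_pos h]
    exact Finset.mem_insert_self _ _
  have hWverts : ∀ w ∈ W, w ∈ (S.flat t).verts := by
    intro w hw
    rw [hWdef] at hw
    split_ifs at hw with h
    · rcases Finset.mem_insert.mp hw with rfl | hw'
      · exact h
      · exact (Finset.mem_filter.mp hw').1
    · exact (Finset.mem_filter.mp hw).1
  set A := (project false D T S).trunc t with hA
  set B := (project false D T (S.removeNode v)).trunc t with hB
  have hAvalid : A.Valid t := trunc_project_valid false D hS htT
  have hBvalid : B.Valid t := trunc_project_valid false D hS' htT
  have hAhas : ∀ w ∈ W.toList, A.hasNode w := by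
    intro w hw
    obtain ⟨s, hs, hw'⟩ := mem_flat_verts_iff.mp (hWverts w (Finset.mem_toList.mp hw))
    exact ⟨s, by rw [hA, trunc_nodes_eq, if_pos hs, project_nodes_eq]; exact hw'⟩
  have hBhas : ∀ w ∈ (W.erase v).toList, B.hasNode w := by
    intro w hw
    rw [Finset.mem_toList, Finset.mem_erase] at hw
    obtain ⟨s, hs, hw'⟩ := mem_flat_verts_iff.mp (hWverts w hw.2)
    refine ⟨s, ?_⟩
    rw [hB, trunc_nodes_eq, if_pos hs, project_nodes_eq]
    exact Finset.mem_erase.mpr ⟨hw.1, hw'⟩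
  have hc1 := CSet_remList W.toList A hAvalid (Finset.nodup_toList W) hAhas
  have hc2 := CSet_remList (W.erase v).toList B hBvalid (Finset.nodup_toList _) hBhas
  have heq := key_eq hS hS' htT W hHW hvW
  rw [← hA, ← hB] at heq
  rw [heq] at hc1
  have hc2' := CSet_symm nodeNeighborStream_symm hc2
  have hcomp := CSet_comp hc1 hc2'
  refine ⟨_, ?_, hcomp⟩
  have hW'card : (W.erase v).card ≤ ℓ := by
    refine le_trans (Finset.card_le_card ?_) hHcard
    intro x hx
    obtain ⟨hxv, hxW⟩ := Finset.mem_erase.mp hx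
    rw [hWdef] at hxW
    split_ifs at hxW with h
    · exact (Finset.mem_insert.mp hxW).resolve_left hxv
    · exact hxW
  have hWcard : W.card ≤ ℓ + 1 := by
    rw [hWdef]
    split_ifs
    · exact (Finset.card_insert_le _ _).trans (by omega)
    · exact hHcard.trans (Nat.le_succ ℓ)
  simp only [Finset.length_toList]
  omega

/-- node-to-node stability of the DLL projection.
For every pair of node-neighboring insertion-only graph streams `S, S'` of length `T`
and every time step `t ∈ [T]` such that both streams are `(D, ℓ)`-bounded through
time `t`, the node distance between the DLL-projected streams through time `t` is at
most `2ℓ + 1`. -/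
theorem dll_node_to_node_stability (T D ℓ : ℕ) (S S' : GraphStream)
    (hS : S.Valid T) (hS' : S'.Valid T) (hnb : nodeNeighborStream S S')
    (t : ℕ) (ht1 : 1 ≤ t) (htT : t ≤ T)
    (hbS : S.DLBoundedThrough D ℓ t) (hbS' : S'.DLBoundedThrough D ℓ t) :
    streamNodeDist t ((projDLL D T S).trunc t) ((projDLL D T S').trunc t) ≤ 2 * ℓ + 1 := by
  rcases hnb with ⟨v, hvnode, rfl⟩ | ⟨v, hvnode, rfl⟩
  · obtain ⟨n, hn, hmem⟩ := main_one_dir (v := v) hS hS' htT hbS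
    exact le_trans (streamChainDist_le hmem) hn
  · obtain ⟨n, hn, hmem⟩ := main_one_dir (v := v) hS' hS htT hbS'
    exact le_trans (streamChainDist_le (CSet_symm nodeNeighborStream_symm hmem)) hn
end

section
/- (Flattening Lemma.) Let Π be any shortsighted algorithm on insertion-only graph streams of length T, i.e., a deterministic map such that Π adds every input node to the output stream at the time the node first arrives, and at each time step adds to the output some subset of the edges arriving at that time step (and no other edges). Then for every pair of edge-neighboring or node-neighboring graph streams S and S' of length T and every t ∈ [T]: d_edge(Π(S)_[t], Π(S')_[t]) = d_edge(flat(Π(S)_[t]), flat(Π(S')_[t])) and d_node(Π(S)_[t], Π(S')_[t]) = d_node(flat(Π(S)_[t]), flat(Π(S')_[t])). -/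
open Finset

/-- A shortsighted algorithm on streams: it keeps every arriving node at its arrival time,
and at each time step it keeps some subset of the edges arriving at that time step
(and adds no other edges). -/
def Shortsighted (Pi : GraphStream → GraphStream) : Prop :=
  ∀ S : GraphStream, (Pi S).nodes = S.nodes ∧ ∀ t, (Pi S).edges t ⊆ S.edges t

section FlatteningAux

open GraphStream

/-! ### Basic facts about validity, `flat`, `trunc` -/

lemma nodes_time_bound {S : GraphStream} {T : ℕ} (h : S.Valid T) {s v : ℕ}
    (hv : v ∈ S.nodes s) : 1 ≤ s ∧ s ≤ T :=
  h.1 s (Or.inl ⟨v, hv⟩)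

lemma edges_time_bound {S : GraphStream} {T : ℕ} (h : S.Valid T) {s : ℕ} {e : Sym2 ℕ}
    (he : e ∈ S.edges s) : 1 ≤ s ∧ s ≤ T :=
  h.1 s (Or.inr ⟨e, he⟩)

lemma mem_flat_verts {S : GraphStream} {t v : ℕ} :
    v ∈ (S.flat t).verts ↔ ∃ s, s ≤ t ∧ v ∈ S.nodes s := by
  simp [GraphStream.flat, Finset.mem_biUnion, Nat.lt_succ_iff]

lemma mem_flat_edges {S : GraphStream} {t : ℕ} {e : Sym2 ℕ} :
    e ∈ (S.flat t).edges ↔ ∃ s, s ≤ t ∧ e ∈ S.edges s := by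
  simp [GraphStream.flat, Finset.mem_biUnion, Nat.lt_succ_iff]

lemma flat_valid {S : GraphStream} {t : ℕ} (h : S.Valid t) : (S.flat t).Valid := by
  intro e he
  rw [mem_flat_edges] at he
  obtain ⟨s, hs, he⟩ := he
  obtain ⟨hd, hv⟩ := h.2.2.2 s e he
  refine ⟨hd, fun v hv' => ?_⟩
  obtain ⟨s', hs', h''⟩ := hv v hv'
  exact mem_flat_verts.mpr ⟨s', hs'.trans hs, h''⟩

lemma flat_removeNode (S : GraphStream) (v t : ℕ) :
    (S.removeNode v).flat t = (S.flat t).removeNode v := by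
  unfold GraphStream.flat GraphStream.removeNode FinGraph.removeNode
  congr 1
  · ext x
    simp only [Finset.mem_biUnion, Finset.mem_erase]
    tauto
  · ext e
    simp only [Finset.mem_biUnion, Finset.mem_filter]
    tauto

lemma flat_removeEdge (S : GraphStream) (e : Sym2 ℕ) (t : ℕ) :
    (S.removeEdge e).flat t = (S.flat t).removeEdge e := by
  unfold GraphStream.flat GraphStream.removeEdge FinGraph.removeEdge
  congr 1
  ext x
  simp only [Finset.mem_biUnion, Finset.mem_erase]
  tauto

lemma notMem_of_degree_zero {G : FinGraph} {v : ℕ} (h : G.degree v = 0) :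
    ∀ e ∈ G.edges, v ∉ e := by
  intro e he hv
  have h0 : G.edges.filter (fun e => v ∈ e) = ∅ := Finset.card_eq_zero.mp h
  have : e ∈ G.edges.filter (fun e => v ∈ e) := Finset.mem_filter.mpr ⟨he, hv⟩
  rw [h0] at this
  exact absurd this (Finset.notMem_empty e)

lemma trunc_flat (P : GraphStream) (t : ℕ) : (P.trunc t).flat t = P.flat t := by
  unfold GraphStream.flat GraphStream.trunc
  congr 1
  · ext x
    simp only [Finset.mem_biUnion, Finset.mem_range, Nat.lt_succ_iff]
    constructor
    · rintro ⟨s, hs, hx⟩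
      rw [if_pos hs] at hx
      exact ⟨s, hs, hx⟩
    · rintro ⟨s, hs, hx⟩
      exact ⟨s, hs, by rw [if_pos hs]; exact hx⟩
  · ext x
    simp only [Finset.mem_biUnion, Finset.mem_range, Nat.lt_succ_iff]
    constructor
    · rintro ⟨s, hs, hx⟩
      rw [if_pos hs] at hx
      exact ⟨s, hs, hx⟩
    · rintro ⟨s, hs, hx⟩
      exact ⟨s, hs, by rw [if_pos hs]; exact hx⟩

lemma trunc_valid_of_sub {S P : GraphStream} {T t : ℕ} (hS : S.Valid T)
    (hn : P.nodes = S.nodes) (he : ∀ s, P.edges s ⊆ S.edges s) :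
    (P.trunc t).Valid t := by
  have hnodes : ∀ s, (P.trunc t).nodes s = if s ≤ t then S.nodes s else ∅ := by
    intro s; simp [GraphStream.trunc, hn]
  have hedges : ∀ s, (P.trunc t).edges s = if s ≤ t then P.edges s else ∅ := by
    intro s; simp [GraphStream.trunc]
  refine ⟨?_, ?_, ?_, ?_⟩
  · intro s h
    by_cases hst : s ≤ t
    · refine ⟨?_, hst⟩
      rcases h with ⟨v, hv⟩ | ⟨e, heM⟩
      · rw [hnodes, if_pos hst] at hv
        exact (nodes_time_bound hS hv).1
      · rw [hedges, if_pos hst] at heM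
        exact (edges_time_bound hS (he s heM)).1
    · rcases h with ⟨v, hv⟩ | ⟨e, heM⟩
      · rw [hnodes, if_neg hst] at hv
        exact absurd hv (Finset.notMem_empty v)
      · rw [hedges, if_neg hst] at heM
        exact absurd heM (Finset.notMem_empty e)
  · intro s s' hss
    rw [Finset.disjoint_left]
    intro a ha ha'
    rw [hnodes] at ha ha'
    split_ifs at ha ha' with h1 h2
    · exact Finset.disjoint_left.mp (hS.2.1 s s' hss) ha ha'
    · exact absurd ha' (Finset.notMem_empty a)
    · exact absurd ha (Finset.notMem_empty a)
    · exact absurd ha (Finset.notMem_empty a)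
  · intro s s' hss
    rw [Finset.disjoint_left]
    intro a ha ha'
    rw [hedges] at ha ha'
    split_ifs at ha ha' with h1 h2
    · exact Finset.disjoint_left.mp (hS.2.2.1 s s' hss) (he s ha) (he s' ha')
    · exact absurd ha' (Finset.notMem_empty a)
    · exact absurd ha (Finset.notMem_empty a)
    · exact absurd ha (Finset.notMem_empty a)
  · intro s e heM
    rw [hedges] at heM
    split_ifs at heM with hst
    · obtain ⟨hd, hv⟩ := hS.2.2.2 s e (he s heM)
      refine ⟨hd, fun v hv' => ?_⟩
      obtain ⟨s', hs', h''⟩ := hv v hv'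
      exact ⟨s', hs', by rw [hnodes, if_pos (hs'.trans hst)]; exact h''⟩
    · exact absurd heM (Finset.notMem_empty e)

/-! ### Arrival times for the lifting construction -/

open Classical in
noncomputable def ntime (A B : GraphStream) (v : ℕ) : ℕ :=
  if (∃ s, v ∈ A.nodes s ∨ v ∈ B.nodes s) then sInf {s | v ∈ A.nodes s ∨ v ∈ B.nodes s}
  else 1

open Classical in
noncomputable def etime (A B : GraphStream) (t : ℕ) (e : Sym2 ℕ) : ℕ :=
  if (∃ s, e ∈ A.edges s ∨ e ∈ B.edges s) then sInf {s | e ∈ A.edges s ∨ e ∈ B.edges s}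
  else t

section Times

variable {A B : GraphStream} {t : ℕ}

lemma ntime_eqA (hA : A.Valid t)
    (hcN : ∀ ⦃s s' v⦄, v ∈ A.nodes s → v ∈ B.nodes s' → s = s')
    {s v : ℕ} (h : v ∈ A.nodes s) : ntime A B v = s := by
  have hne : ∃ s', v ∈ A.nodes s' ∨ v ∈ B.nodes s' := ⟨s, Or.inl h⟩
  rw [ntime, if_pos hne]
  have hm := Nat.sInf_mem (⟨s, Or.inl h⟩ : Set.Nonempty {s' | v ∈ A.nodes s' ∨ v ∈ B.nodes s'})
  rcases hm with h' | h'
  · by_contra hne'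
    exact Finset.disjoint_left.mp (hA.2.1 _ _ hne') h' h
  · exact (hcN h h').symm

lemma ntime_eqB (hB : B.Valid t)
    (hcN : ∀ ⦃s s' v⦄, v ∈ A.nodes s → v ∈ B.nodes s' → s = s')
    {s v : ℕ} (h : v ∈ B.nodes s) : ntime A B v = s := by
  have hne : ∃ s', v ∈ A.nodes s' ∨ v ∈ B.nodes s' := ⟨s, Or.inr h⟩
  rw [ntime, if_pos hne]
  have hm := Nat.sInf_mem (⟨s, Or.inr h⟩ : Set.Nonempty {s' | v ∈ A.nodes s' ∨ v ∈ B.nodes s'})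
  rcases hm with h' | h'
  · exact hcN h' h
  · by_contra hne'
    exact Finset.disjoint_left.mp (hB.2.1 _ _ hne') h' h

lemma etime_eqA (hA : A.Valid t)
    (hcE : ∀ ⦃s s' : ℕ⦄ ⦃e : Sym2 ℕ⦄, e ∈ A.edges s → e ∈ B.edges s' → s = s')
    {s : ℕ} {e : Sym2 ℕ} (h : e ∈ A.edges s) : etime A B t e = s := by
  have hne : ∃ s', e ∈ A.edges s' ∨ e ∈ B.edges s' := ⟨s, Or.inl h⟩
  rw [etime, if_pos hne]
  have hm := Nat.sInf_mem (⟨s, Or.inl h⟩ : Set.Nonempty {s' | e ∈ A.edges s' ∨ e ∈ B.edges s'})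
  rcases hm with h' | h'
  · by_contra hne'
    exact Finset.disjoint_left.mp (hA.2.2.1 _ _ hne') h' h
  · exact (hcE h h').symm

lemma etime_eqB (hB : B.Valid t)
    (hcE : ∀ ⦃s s' : ℕ⦄ ⦃e : Sym2 ℕ⦄, e ∈ A.edges s → e ∈ B.edges s' → s = s')
    {s : ℕ} {e : Sym2 ℕ} (h : e ∈ B.edges s) : etime A B t e = s := by
  have hne : ∃ s', e ∈ A.edges s' ∨ e ∈ B.edges s' := ⟨s, Or.inr h⟩
  rw [etime, if_pos hne]
  have hm := Nat.sInf_mem (⟨s, Or.inr h⟩ : Set.Nonempty {s' | e ∈ A.edges s' ∨ e ∈ B.edges s'})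
  rcases hm with h' | h'
  · exact hcE h' h
  · by_contra hne'
    exact Finset.disjoint_left.mp (hB.2.2.1 _ _ hne') h' h

lemma ntime_bounds (ht1 : 1 ≤ t) (hA : A.Valid t) (hB : B.Valid t)
    (hcN : ∀ ⦃s s' v⦄, v ∈ A.nodes s → v ∈ B.nodes s' → s = s') (v : ℕ) :
    1 ≤ ntime A B v ∧ ntime A B v ≤ t := by
  by_cases h : ∃ s, v ∈ A.nodes s ∨ v ∈ B.nodes s
  · rcases h with ⟨s, h | h⟩
    · rw [ntime_eqA hA hcN h]; exact nodes_time_bound hA h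
    · rw [ntime_eqB hB hcN h]; exact nodes_time_bound hB h
  · rw [ntime, if_neg h]; exact ⟨le_refl 1, ht1⟩

lemma etime_bounds (ht1 : 1 ≤ t) (hA : A.Valid t) (hB : B.Valid t)
    (hcE : ∀ ⦃s s' : ℕ⦄ ⦃e : Sym2 ℕ⦄, e ∈ A.edges s → e ∈ B.edges s' → s = s') (e : Sym2 ℕ) :
    1 ≤ etime A B t e ∧ etime A B t e ≤ t := by
  by_cases h : ∃ s, e ∈ A.edges s ∨ e ∈ B.edges s
  · rcases h with ⟨s, h | h⟩
    · rw [etime_eqA hA hcE h]; exact edges_time_bound hA h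
    · rw [etime_eqB hB hcE h]; exact edges_time_bound hB h
  · rw [etime, if_neg h]; exact ⟨ht1, le_refl t⟩

lemma ntime_le_etime (ht1 : 1 ≤ t) (hA : A.Valid t) (hB : B.Valid t)
    (hcN : ∀ ⦃s s' v⦄, v ∈ A.nodes s → v ∈ B.nodes s' → s = s')
    (hcE : ∀ ⦃s s' : ℕ⦄ ⦃e : Sym2 ℕ⦄, e ∈ A.edges s → e ∈ B.edges s' → s = s')
    {v : ℕ} {e : Sym2 ℕ} (hv : v ∈ e) : ntime A B v ≤ etime A B t e := by
  by_cases h : ∃ s, e ∈ A.edges s ∨ e ∈ B.edges s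
  · rcases h with ⟨s, h | h⟩
    · rw [etime_eqA hA hcE h]
      obtain ⟨_, hvv⟩ := hA.2.2.2 s e h
      obtain ⟨s', hs', hv'⟩ := hvv v hv
      rw [ntime_eqA hA hcN hv']; exact hs'
    · rw [etime_eqB hB hcE h]
      obtain ⟨_, hvv⟩ := hB.2.2.2 s e h
      obtain ⟨s', hs', hv'⟩ := hvv v hv
      rw [ntime_eqB hB hcN hv']; exact hs'
  · rw [etime, if_neg h]
    exact (ntime_bounds ht1 hA hB hcN v).2

end Times

/-! ### The lifting of a graph to a stream -/

noncomputable def liftG (A B : GraphStream) (t : ℕ) (G : FinGraph) : GraphStream :=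
  ⟨fun s => G.verts.filter (fun v => ntime A B v = s),
   fun s => G.edges.filter (fun e => etime A B t e = s)⟩

section Lift

variable {A B : GraphStream} {t : ℕ}
variable (ht1 : 1 ≤ t) (hA : A.Valid t) (hB : B.Valid t)
variable (hcN : ∀ ⦃s s' v⦄, v ∈ A.nodes s → v ∈ B.nodes s' → s = s')
variable (hcE : ∀ ⦃s s' : ℕ⦄ ⦃e : Sym2 ℕ⦄, e ∈ A.edges s → e ∈ B.edges s' → s = s')

include ht1 hA hB hcN hcE

omit ht1 hB in
lemma liftG_flatA : liftG A B t (A.flat t) = A := by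
  unfold liftG
  have hn : (fun s => (A.flat t).verts.filter (fun v => ntime A B v = s)) = A.nodes := by
    funext s
    ext v
    simp only [Finset.mem_filter, mem_flat_verts]
    constructor
    · rintro ⟨⟨s', hs', hv⟩, hnt⟩
      rw [ntime_eqA hA hcN hv] at hnt
      exact hnt ▸ hv
    · intro hv
      exact ⟨⟨s, (nodes_time_bound hA hv).2, hv⟩, ntime_eqA hA hcN hv⟩
  have he : (fun s => (A.flat t).edges.filter (fun e => etime A B t e = s)) = A.edges := by
    funext s
    ext e
    simp only [Finset.mem_filter, mem_flat_edges]
    constructor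
    · rintro ⟨⟨s', hs', hv⟩, hnt⟩
      rw [etime_eqA hA hcE hv] at hnt
      exact hnt ▸ hv
    · intro hv
      exact ⟨⟨s, (edges_time_bound hA hv).2, hv⟩, etime_eqA hA hcE hv⟩
  rw [hn, he]

omit ht1 hA in
lemma liftG_flatB : liftG A B t (B.flat t) = B := by
  unfold liftG
  have hn : (fun s => (B.flat t).verts.filter (fun v => ntime A B v = s)) = B.nodes := by
    funext s
    ext v
    simp only [Finset.mem_filter, mem_flat_verts]
    constructor
    · rintro ⟨⟨s', hs', hv⟩, hnt⟩
      rw [ntime_eqB hB hcN hv] at hnt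
      exact hnt ▸ hv
    · intro hv
      exact ⟨⟨s, (nodes_time_bound hB hv).2, hv⟩, ntime_eqB hB hcN hv⟩
  have he : (fun s => (B.flat t).edges.filter (fun e => etime A B t e = s)) = B.edges := by
    funext s
    ext e
    simp only [Finset.mem_filter, mem_flat_edges]
    constructor
    · rintro ⟨⟨s', hs', hv⟩, hnt⟩
      rw [etime_eqB hB hcE hv] at hnt
      exact hnt ▸ hv
    · intro hv
      exact ⟨⟨s, (edges_time_bound hB hv).2, hv⟩, etime_eqB hB hcE hv⟩
  rw [hn, he]

omit hcE in
lemma liftG_flat (hcE : ∀ ⦃s s' : ℕ⦄ ⦃e : Sym2 ℕ⦄, e ∈ A.edges s → e ∈ B.edges s' → s = s')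
    (G : FinGraph) : (liftG A B t G).flat t = G := by
  unfold liftG GraphStream.flat
  have hn : (Finset.range (t + 1)).biUnion
      (fun s => G.verts.filter (fun v => ntime A B v = s)) = G.verts := by
    ext v
    simp only [Finset.mem_biUnion, Finset.mem_range, Finset.mem_filter, Nat.lt_succ_iff]
    constructor
    · rintro ⟨s, _, hv, _⟩; exact hv
    · intro hv
      exact ⟨ntime A B v, (ntime_bounds ht1 hA hB hcN v).2, hv, rfl⟩
  have he : (Finset.range (t + 1)).biUnion
      (fun s => G.edges.filter (fun e => etime A B t e = s)) = G.edges := by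
    ext e
    simp only [Finset.mem_biUnion, Finset.mem_range, Finset.mem_filter, Nat.lt_succ_iff]
    constructor
    · rintro ⟨s, _, hv, _⟩; exact hv
    · intro hv
      exact ⟨etime A B t e, (etime_bounds ht1 hA hB hcE e).2, hv, rfl⟩
  rw [hn, he]

lemma liftG_valid {G : FinGraph} (hG : G.Valid) : (liftG A B t G).Valid t := by
  refine ⟨?_, ?_, ?_, ?_⟩
  · intro s h
    rcases h with ⟨v, hv⟩ | ⟨e, he⟩
    · obtain ⟨_, rfl⟩ := Finset.mem_filter.mp hv
      exact ntime_bounds ht1 hA hB hcN v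
    · obtain ⟨_, rfl⟩ := Finset.mem_filter.mp he
      exact etime_bounds ht1 hA hB hcE e
  · intro s s' hss
    rw [Finset.disjoint_left]
    intro a ha ha'
    obtain ⟨_, h1⟩ := Finset.mem_filter.mp ha
    obtain ⟨_, h2⟩ := Finset.mem_filter.mp ha'
    exact hss (h1 ▸ h2)
  · intro s s' hss
    rw [Finset.disjoint_left]
    intro a ha ha'
    obtain ⟨_, h1⟩ := Finset.mem_filter.mp ha
    obtain ⟨_, h2⟩ := Finset.mem_filter.mp ha'
    exact hss (h1 ▸ h2)
  · intro s e he
    obtain ⟨heG, hs⟩ := Finset.mem_filter.mp he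
    obtain ⟨hd, hv⟩ := hG e heG
    refine ⟨hd, fun v hv' => ?_⟩
    refine ⟨ntime A B v, ?_, Finset.mem_filter.mpr ⟨hv v hv', rfl⟩⟩
    rw [← hs]
    exact ntime_le_etime ht1 hA hB hcN hcE hv'

omit ht1 hA hB hcN hcE in
lemma liftG_removeNode (G : FinGraph) (v : ℕ) :
    liftG A B t (G.removeNode v) = (liftG A B t G).removeNode v := by
  unfold liftG FinGraph.removeNode GraphStream.removeNode
  congr 1
  · funext s
    ext x
    simp only [Finset.mem_filter, Finset.mem_erase]
    tauto
  · funext s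
    ext e
    simp only [Finset.mem_filter]
    tauto

omit ht1 hA hB hcN hcE in
lemma liftG_removeEdge (G : FinGraph) (e : Sym2 ℕ) :
    liftG A B t (G.removeEdge e) = (liftG A B t G).removeEdge e := by
  unfold liftG FinGraph.removeEdge GraphStream.removeEdge
  congr 1
  funext s
  ext x
  simp only [Finset.mem_filter, Finset.mem_erase]
  tauto

omit ht1 hA hB hcN hcE in
lemma liftG_eraseIsolated (G : FinGraph) (v : ℕ) (h0 : ∀ e ∈ G.edges, v ∉ e) :
    liftG A B t ⟨G.verts.erase v, G.edges⟩ = (liftG A B t G).removeNode v := by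
  unfold liftG GraphStream.removeNode
  congr 1
  · funext s
    ext x
    simp only [Finset.mem_filter, Finset.mem_erase]
    tauto
  · funext s
    ext e
    simp only [Finset.mem_filter]
    constructor
    · rintro ⟨he, hs⟩
      exact ⟨⟨he, hs⟩, h0 e he⟩
    · rintro ⟨⟨he, hs⟩, _⟩
      exact ⟨he, hs⟩

omit ht1 hA hB hcN hcE in
lemma liftG_hasNode {G : FinGraph} {v : ℕ} (hv : v ∈ G.verts) :
    (liftG A B t G).hasNode v :=
  ⟨ntime A B v, Finset.mem_filter.mpr ⟨hv, rfl⟩⟩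

lemma liftG_edgeRel {G G' : FinGraph} (h : edgeRemovalGraph G G') :
    edgeRemovalStream t (liftG A B t G) (liftG A B t G') := by
  rcases h with ⟨e, he, rfl⟩ | ⟨v, hv, hdeg, rfl⟩ | ⟨v, hv, hdeg, rfl⟩
  · left
    exact ⟨etime A B t e, e, Finset.mem_filter.mpr ⟨he, rfl⟩,
      liftG_removeEdge G e⟩
  · right
    refine ⟨v, liftG_hasNode hv, ?_, ?_⟩
    · rw [liftG_flat ht1 hA hB hcN hcE G, hdeg]
      exact Nat.zero_le 1
    · exact liftG_eraseIsolated G v (notMem_of_degree_zero hdeg)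
  · right
    refine ⟨v, liftG_hasNode hv, ?_, liftG_removeNode G v⟩
    rw [liftG_flat ht1 hA hB hcN hcE G, hdeg]

lemma liftG_edgeNeighbor {G G' : FinGraph}
    (h : edgeNeighborGraph G G') :
    edgeNeighborStream t (liftG A B t G) (liftG A B t G') := by
  rcases h with h | h
  · exact Or.inl (liftG_edgeRel ht1 hA hB hcN hcE h)
  · exact Or.inr (liftG_edgeRel ht1 hA hB hcN hcE h)

omit ht1 hA hB hcN hcE in
lemma liftG_nodeNeighbor {G G' : FinGraph} (h : nodeNeighborGraph G G') :
    nodeNeighborStream (liftG A B t G) (liftG A B t G') := by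
  rcases h with ⟨v, hv, rfl⟩ | ⟨v, hv, rfl⟩
  · exact Or.inl ⟨v, liftG_hasNode hv, liftG_removeNode G v⟩
  · exact Or.inr ⟨v, liftG_hasNode hv, liftG_removeNode G' v⟩

end Lift

/-! ### Flattening stream relations to graph relations -/

lemma flat_edgeRel {t : ℕ} {P Q : GraphStream} (hP : P.Valid t)
    (h : edgeRemovalStream t P Q) :
    edgeRemovalGraph (P.flat t) (Q.flat t) := by
  rcases h with ⟨s, e, he, rfl⟩ | ⟨v, ⟨s, hv⟩, hdeg, rfl⟩
  · left
    exact ⟨e, mem_flat_edges.mpr ⟨s, (edges_time_bound hP he).2, he⟩,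
      flat_removeEdge P e t⟩
  · have hvf : v ∈ (P.flat t).verts :=
      mem_flat_verts.mpr ⟨s, (nodes_time_bound hP hv).2, hv⟩
    rcases Nat.le_one_iff_eq_zero_or_eq_one.mp hdeg with h0 | h1
    · right; left
      refine ⟨v, hvf, h0, ?_⟩
      rw [flat_removeNode]
      unfold FinGraph.removeNode
      congr 1
      exact Finset.filter_true_of_mem fun e he => notMem_of_degree_zero h0 e he
    · right; right
      exact ⟨v, hvf, h1, flat_removeNode P v t⟩

lemma flat_edgeNeighbor {t : ℕ} {P Q : GraphStream} (hP : P.Valid t) (hQ : Q.Valid t)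
    (h : edgeNeighborStream t P Q) :
    edgeNeighborGraph (P.flat t) (Q.flat t) := by
  rcases h with h | h
  · exact Or.inl (flat_edgeRel hP h)
  · exact Or.inr (flat_edgeRel hQ h)

lemma flat_nodeNeighbor {t : ℕ} {P Q : GraphStream} (hP : P.Valid t) (hQ : Q.Valid t)
    (h : nodeNeighborStream P Q) :
    nodeNeighborGraph (P.flat t) (Q.flat t) := by
  rcases h with ⟨v, ⟨s, hv⟩, rfl⟩ | ⟨v, ⟨s, hv⟩, rfl⟩
  · exact Or.inl ⟨v, mem_flat_verts.mpr ⟨s, (nodes_time_bound hP hv).2, hv⟩,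
      flat_removeNode P v t⟩
  · exact Or.inr ⟨v, mem_flat_verts.mpr ⟨s, (nodes_time_bound hQ hv).2, hv⟩,
      flat_removeNode Q v t⟩

/-! ### The main distance equality -/

lemma streamDist_eq_graphDist {t : ℕ} (ht1 : 1 ≤ t) {A B : GraphStream}
    (hA : A.Valid t) (hB : B.Valid t)
    (hcN : ∀ ⦃s s' v⦄, v ∈ A.nodes s → v ∈ B.nodes s' → s = s')
    (hcE : ∀ ⦃s s' : ℕ⦄ ⦃e : Sym2 ℕ⦄, e ∈ A.edges s → e ∈ B.edges s' → s = s') :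
    streamEdgeDist t A B = graphEdgeDist (A.flat t) (B.flat t) ∧
    streamNodeDist t A B = graphNodeDist (A.flat t) (B.flat t) := by
  constructor
  · unfold streamEdgeDist graphEdgeDist streamChainDist graphChainDist
    congr 1
    ext n
    simp only [Set.mem_setOf_eq]
    constructor
    · rintro ⟨f, h0, hn, hval, hrel⟩
      refine ⟨fun i => (f i).flat t, by simp only []; rw [h0], by simp only []; rw [hn],
        fun i hi => flat_valid (hval i hi), fun i hi => ?_⟩
      exact flat_edgeNeighbor (hval i hi.le) (hval (i + 1) hi) (hrel i hi)
    · rintro ⟨g, h0, hn, hval, hrel⟩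
      refine ⟨fun i => liftG A B t (g i), ?_, ?_,
        fun i hi => liftG_valid ht1 hA hB hcN hcE (hval i hi),
        fun i hi => liftG_edgeNeighbor ht1 hA hB hcN hcE (hrel i hi)⟩
      · simp only []; rw [h0, liftG_flatA hA hcN hcE]
      · simp only []; rw [hn, liftG_flatB hB hcN hcE]
  · unfold streamNodeDist graphNodeDist streamChainDist graphChainDist
    congr 1
    ext n
    simp only [Set.mem_setOf_eq]
    constructor
    · rintro ⟨f, h0, hn, hval, hrel⟩
      refine ⟨fun i => (f i).flat t, by simp only []; rw [h0], by simp only []; rw [hn],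
        fun i hi => flat_valid (hval i hi), fun i hi => ?_⟩
      exact flat_nodeNeighbor (hval i hi.le) (hval (i + 1) hi) (hrel i hi)
    · rintro ⟨g, h0, hn, hval, hrel⟩
      refine ⟨fun i => liftG A B t (g i), ?_, ?_,
        fun i hi => liftG_valid ht1 hA hB hcN hcE (hval i hi),
        fun i hi => liftG_nodeNeighbor (hrel i hi)⟩
      · simp only []; rw [h0, liftG_flatA hA hcN hcE]
      · simp only []; rw [hn, liftG_flatB hB hcN hcE]

/-! ### Subset facts for neighboring streams -/

lemma edgeRemoval_sub {T : ℕ} {S S' : GraphStream} (h : edgeRemovalStream T S S') :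
    ∀ s, S'.nodes s ⊆ S.nodes s ∧ S'.edges s ⊆ S.edges s := by
  rcases h with ⟨t', e, he, rfl⟩ | ⟨v, _, _, rfl⟩
  · intro s
    exact ⟨subset_rfl, fun x hx => Finset.mem_of_mem_erase hx⟩
  · intro s
    exact ⟨fun x hx => Finset.mem_of_mem_erase hx, Finset.filter_subset _ _⟩

lemma nodeRemoval_sub {S S' : GraphStream} (h : nodeRemovalStream S S') :
    ∀ s, S'.nodes s ⊆ S.nodes s ∧ S'.edges s ⊆ S.edges s := by
  rcases h with ⟨v, _, rfl⟩
  intro s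
  exact ⟨fun x hx => Finset.mem_of_mem_erase hx, Finset.filter_subset _ _⟩

lemma mem_trunc_nodes {P : GraphStream} {t s v : ℕ} :
    v ∈ (P.trunc t).nodes s ↔ s ≤ t ∧ v ∈ P.nodes s := by
  by_cases h : s ≤ t <;> simp [GraphStream.trunc, h]

lemma mem_trunc_edges {P : GraphStream} {t s : ℕ} {e : Sym2 ℕ} :
    e ∈ (P.trunc t).edges s ↔ s ≤ t ∧ e ∈ P.edges s := by
  by_cases h : s ≤ t <;> simp [GraphStream.trunc, h]

end FlatteningAux
/-- Flattening Lemma.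
Let `Pi` be any shortsighted algorithm on insertion-only graph streams of length `T`.
Then for every pair of edge-neighboring or node-neighboring graph streams `S, S'` of
length `T` and every `t ∈ [T]`, the edge (resp. node) distance between the output
streams through time `t` equals the edge (resp. node) distance between the flattened
output graphs through time `t`. -/
theorem flattening_lemma (T : ℕ) (Pi : GraphStream → GraphStream)
    (hPi : Shortsighted Pi) (S S' : GraphStream)
    (hS : S.Valid T) (hS' : S'.Valid T)
    (hnb : edgeNeighborStream T S S' ∨ nodeNeighborStream S S')
    (t : ℕ) (ht1 : 1 ≤ t) (htT : t ≤ T) :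
    streamEdgeDist t ((Pi S).trunc t) ((Pi S').trunc t)
        = graphEdgeDist ((Pi S).flat t) ((Pi S').flat t) ∧
    streamNodeDist t ((Pi S).trunc t) ((Pi S').trunc t)
        = graphNodeDist ((Pi S).flat t) ((Pi S').flat t) := by
  obtain ⟨hnodesS, hedgesS⟩ := hPi S
  obtain ⟨hnodesS', hedgesS'⟩ := hPi S'
  have hA : ((Pi S).trunc t).Valid t := trunc_valid_of_sub hS hnodesS hedgesS
  have hB : ((Pi S').trunc t).Valid t := trunc_valid_of_sub hS' hnodesS' hedgesS'
  have hsub : (∀ s, S'.nodes s ⊆ S.nodes s ∧ S'.edges s ⊆ S.edges s) ∨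
      (∀ s, S.nodes s ⊆ S'.nodes s ∧ S.edges s ⊆ S'.edges s) := by
    rcases hnb with (h | h) | (h | h)
    · exact Or.inl (edgeRemoval_sub h)
    · exact Or.inr (edgeRemoval_sub h)
    · exact Or.inl (nodeRemoval_sub h)
    · exact Or.inr (nodeRemoval_sub h)
  have hcN : ∀ ⦃s s' v : ℕ⦄, v ∈ ((Pi S).trunc t).nodes s →
      v ∈ ((Pi S').trunc t).nodes s' → s = s' := by
    intro s s' v h h'
    obtain ⟨-, h⟩ := mem_trunc_nodes.mp h
    obtain ⟨-, h'⟩ := mem_trunc_nodes.mp h'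
    rw [hnodesS] at h
    rw [hnodesS'] at h'
    by_contra hne
    rcases hsub with hs | hs
    · exact Finset.disjoint_left.mp (hS.2.1 s s' hne) h ((hs s').1 h')
    · exact Finset.disjoint_left.mp (hS'.2.1 s s' hne) ((hs s).1 h) h'
  have hcE : ∀ ⦃s s' : ℕ⦄ ⦃e : Sym2 ℕ⦄, e ∈ ((Pi S).trunc t).edges s →
      e ∈ ((Pi S').trunc t).edges s' → s = s' := by
    intro s s' e h h'
    obtain ⟨-, h⟩ := mem_trunc_edges.mp h
    obtain ⟨-, h'⟩ := mem_trunc_edges.mp h'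
    have h2 : e ∈ S.edges s := hedgesS s h
    have h2' : e ∈ S'.edges s' := hedgesS' s' h'
    by_contra hne
    rcases hsub with hs | hs
    · exact Finset.disjoint_left.mp (hS.2.2.1 s s' hne) h2 ((hs s').2 h2')
    · exact Finset.disjoint_left.mp (hS'.2.2.1 s s' hne) ((hs s).2 h2) h2'
  have key := streamDist_eq_graphDist ht1 hA hB hcN hcE
  rwa [trunc_flat, trunc_flat] at key
end
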